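/- Let R be a finite commutative chain ring and A an r×n matrix over R with linearly independent rows. Then at least one r×r minor of A is a unit in R. -/

import Mathlib

open Module Submodule Matrix

/-- Field case: a matrix with linearly independent rows over a field has an
invertible `r×r` submatrix with strictly monotone column selection. -/
lemma stmt13_field {k : Type*} [Field k] {r n : ℕ} (B : Matrix (Fin r) (Fin n) k)
    (hB : LinearIndependent k B) :
    ∃ g : Fin r → Fin n, StrictMono g ∧ IsUnit (B.submatrix id g).det := by
  classical
  -- columns span everything
  have hrank : B.rank = r := by simpa using hB.rank_matrix
  have hspan : Submodule.span k (Set.range Bᵀ) = ⊤ := by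
    apply Submodule.eq_top_of_finrank_eq
    change finrank k (span k (Set.range B.col)) = _
    rw [← Matrix.rank_eq_finrank_span_cols, hrank]
    simp [Module.finrank_pi]
  obtain ⟨b, hbsub, hbspan, hbli⟩ := exists_linearIndependent k (Set.range Bᵀ)
  rw [hspan] at hbspan
  have hbfin : b.Finite := (Set.finite_range Bᵀ).subset hbsub
  haveI : Fintype b := hbfin.fintype
  -- b is a basis, so it has cardinality r
  let bas : Basis b k (Fin r → k) := Basis.mk hbli (by rw [Subtype.range_val, hbspan])
  have hcard : Fintype.card b = r := by
    have := Module.finrank_eq_card_basis bas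
    simpa [Module.finrank_pi] using this.symm
  let e : Fin r ≃ b := (Fintype.equivFinOfCardEq hcard).symm
  -- choose a column index for each element of b
  have hchoose : ∀ v : b, ∃ j : Fin n, Bᵀ j = (v : Fin r → k) := fun v => hbsub v.2
  choose j0 hj0 using hchoose
  let g0 : Fin r → Fin n := fun i => j0 (e i)
  have hg0col : ∀ i, Bᵀ (g0 i) = ((e i : b) : Fin r → k) := fun i => hj0 (e i)
  have hg0li : LinearIndependent k (fun i => Bᵀ (g0 i)) := by
    have : (fun i => Bᵀ (g0 i)) = ((↑) : b → Fin r → k) ∘ e := by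
      funext i; exact hg0col i
    rw [this]
    exact hbli.comp e e.injective
  have hg0inj : Function.Injective g0 := by
    intro a b' hab
    have : Bᵀ (g0 a) = Bᵀ (g0 b') := by rw [hab]
    rw [hg0col, hg0col] at this
    exact e.injective (Subtype.ext this)
  -- sort g0 into a strictly monotone map
  let t : Finset (Fin n) := Finset.univ.image g0
  have htcard : t.card = r := by
    rw [Finset.card_image_of_injective _ hg0inj, Finset.card_univ, Fintype.card_fin]
  let g : Fin r → Fin n := fun i => (t.orderIsoOfFin htcard i : Fin n)
  have hgmono : StrictMono g := fun a b' h => (t.orderIsoOfFin htcard).strictMono h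
  have hginj : Function.Injective g := hgmono.injective
  have hrange : Set.range g0 = Set.range g := by
    have h1 : Set.range g0 = (t : Set (Fin n)) := by
      ext x; simp [t, Set.mem_range]
    have h2 : Set.range g = (t : Set (Fin n)) := by
      ext x
      constructor
      · rintro ⟨i, rfl⟩; exact (t.orderIsoOfFin htcard i).2
      · intro hx
        refine ⟨(t.orderIsoOfFin htcard).symm ⟨x, hx⟩, ?_⟩
        show ((t.orderIsoOfFin htcard) ((t.orderIsoOfFin htcard).symm ⟨x, hx⟩) : Fin n) = x
        exact congrArg Subtype.val ((t.orderIsoOfFin htcard).apply_symm_apply ⟨x, hx⟩)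
    rw [h1, h2]
  -- g = g0 ∘ σ for a permutation σ
  let σ : Fin r ≃ Fin r :=
    ((Equiv.ofInjective g hginj).trans (Equiv.setCongr hrange.symm)).trans
      (Equiv.ofInjective g0 hg0inj).symm
  have hgσ : ∀ i, g0 (σ i) = g i := by
    intro i
    simp only [σ, Equiv.trans_apply]
    exact congrArg Subtype.val ((Equiv.ofInjective g0 hg0inj).apply_symm_apply _)
  have hgli : LinearIndependent k (fun i => Bᵀ (g i)) := by
    have : (fun i => Bᵀ (g i)) = (fun i => Bᵀ (g0 i)) ∘ σ := by
      funext i; rw [Function.comp_apply, hgσ]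
    rw [this]
    exact hg0li.comp σ σ.injective
  refine ⟨g, hgmono, ?_⟩
  rw [← Matrix.isUnit_iff_isUnit_det]
  rw [← Matrix.linearIndependent_cols_iff_isUnit]
  have : ∀ i, (B.submatrix id g)ᵀ i = Bᵀ (g i) := by
    intro i; funext x; simp [Matrix.transpose_apply, Matrix.submatrix_apply]
  convert hgli using 1
  funext i
  exact this i

/-- In a finite local ring there is a nonzero element annihilating the maximal ideal
(or the ring is a field, in which case `1` works). -/
lemma stmt13_ann (R : Type*) [CommRing R] [Fintype R] [IsLocalRing R] :
    ∃ x : R, x ≠ 0 ∧ ∀ y ∈ IsLocalRing.maximalIdeal R, x * y = 0 := by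
  classical
  have hnil : IsNilpotent (IsLocalRing.maximalIdeal R) := by
    rw [← IsLocalRing.jacobson_eq_maximalIdeal (⊥ : Ideal R) bot_ne_top]
    exact IsArtinianRing.isNilpotent_jacobson_bot
  obtain ⟨e, he⟩ := hnil
  have hex : ∃ t, (IsLocalRing.maximalIdeal R) ^ t = ⊥ := ⟨e, by simpa using he⟩
  let t := Nat.find hex
  have ht : (IsLocalRing.maximalIdeal R) ^ t = ⊥ := Nat.find_spec hex
  have ht0 : t ≠ 0 := by
    intro h
    rw [h, pow_zero, Ideal.one_eq_top] at ht
    exact top_ne_bot ht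
  have hprev : (IsLocalRing.maximalIdeal R) ^ (t - 1) ≠ ⊥ :=
    Nat.find_min hex (by omega)
  obtain ⟨x, hxmem, hx0⟩ := Submodule.exists_mem_ne_zero_of_ne_bot hprev
  refine ⟨x, hx0, fun y hy => ?_⟩
  have : x * y ∈ (IsLocalRing.maximalIdeal R) ^ t := by
    have : (IsLocalRing.maximalIdeal R) ^ t = (IsLocalRing.maximalIdeal R) ^ (t - 1) *
        IsLocalRing.maximalIdeal R := by
      rw [← pow_succ]
      congr 1
      omega
    rw [this]
    exact Ideal.mul_mem_mul hxmem hy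
  rwa [ht, Ideal.mem_bot] at this

/-- Over a finite commutative chain ring, a matrix with linearly independent
rows has at least one `r×r` minor which is a unit. -/
theorem stmt13 (R : Type*) [CommRing R] [Fintype R] [IsLocalRing R]
    [IsPrincipalIdealRing R]
    (r n : ℕ) (A : Matrix (Fin r) (Fin n) R) (hA : LinearIndependent R A) :
    ∃ g : Fin r → Fin n, StrictMono g ∧ IsUnit (A.submatrix id g).det := by
  classical
  let k := IsLocalRing.ResidueField R
  let ρ : R →+* k := IsLocalRing.residue R
  let B : Matrix (Fin r) (Fin n) k := A.map ρ
  obtain ⟨x, hx0, hxann⟩ := stmt13_ann R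
  -- the reduced rows are linearly independent over the residue field
  have hB : LinearIndependent k B := by
    refine Fintype.linearIndependent_iff.mpr ?_
    intro c hc i
    obtain ⟨d, hd⟩ : ∃ d : Fin r → R, ∀ i, ρ (d i) = c i := by
      have := fun i => Ideal.Quotient.mk_surjective (c i)
      choose d hd using this
      exact ⟨d, hd⟩
    by_contra hci
    -- all entries of ∑ d i • A i lie in the maximal ideal
    have hmem : ∀ j, (∑ i, d i * A i j) ∈ IsLocalRing.maximalIdeal R := by
      intro j
      have hj := congrFun hc j
      simp only [Finset.sum_apply, Pi.smul_apply, smul_eq_mul, Pi.zero_apply] at hj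
      have : ρ (∑ i, d i * A i j) = 0 := by
        rw [map_sum]
        rw [← hj]
        congr 1
        funext i
        rw [_root_.map_mul, hd]
        rfl
      rwa [← Ideal.Quotient.eq_zero_iff_mem]
    -- multiply by the annihilator x
    have hzero : ∑ i, (x * d i) • A i = 0 := by
      funext j
      simp only [Finset.sum_apply, Pi.smul_apply, smul_eq_mul, Pi.zero_apply]
      have : ∑ i, x * d i * A i j = x * ∑ i, d i * A i j := by
        rw [Finset.mul_sum]
        congr 1
        funext i
        ring
      rw [this, hxann _ (hmem j)]
    have hall := Fintype.linearIndependent_iff.mp hA (fun i => x * d i) hzero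
    have hxdi : x * d i = 0 := hall i
    -- d i is a unit since c i ≠ 0
    have hdu : IsUnit (d i) := by
      by_contra hdn
      have : d i ∈ IsLocalRing.maximalIdeal R := hdn
      have : ρ (d i) = 0 := Ideal.Quotient.eq_zero_iff_mem.mpr this
      rw [hd] at this
      exact hci this
    obtain ⟨u, hu⟩ := hdu
    apply hx0
    have : x * d i * (↑u⁻¹ : R) = 0 := by rw [hxdi, zero_mul]
    rwa [mul_assoc, ← hu, Units.mul_inv, mul_one] at this
  obtain ⟨g, hg, hdet⟩ := stmt13_field B hB
  refine ⟨g, hg, ?_⟩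
  -- reduce unit-ness of det to the residue field
  have hmap : (B.submatrix id g).det = ρ (A.submatrix id g).det := by
    rw [RingHom.map_det]
    rfl
  rw [hmap] at hdet
  by_contra hnu
  have : (A.submatrix id g).det ∈ IsLocalRing.maximalIdeal R := hnu
  have : ρ (A.submatrix id g).det = 0 := Ideal.Quotient.eq_zero_iff_mem.mpr this
  rw [this] at hdet
  exact hdet.ne_zero rfl
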